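/- Let W define a signed network whose underlying graph is a tree (connected and acyclic). Then i₋(L), the number of negative eigenvalues of the signed Laplacian L, equals the number of negative edges of the network. -/

import Mathlib

attribute [local instance] Classical.propDecidable


open Matrix Finset Filter

/-- The signed Laplacian of a signed network with weight matrix `W`. -/
noncomputable def signedLaplacian {n : ℕ} (W : Matrix (Fin n) (Fin n) ℝ) :
    Matrix (Fin n) (Fin n) ℝ :=
  Matrix.of fun i j => if i = j then ∑ k, W i k else -W i j

/-- The number of negative eigenvalues (with multiplicity) of a Hermitian real matrix. -/
noncomputable def negEigCount {n : ℕ} (L : Matrix (Fin n) (Fin n) ℝ)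
    (hL : L.IsHermitian) : ℕ :=
  letI := Classical.decPred (fun i : Fin n => hL.eigenvalues i < 0)
  (Finset.univ.filter fun i : Fin n => hL.eigenvalues i < 0).card

/-- The underlying simple graph of a signed network: `i` and `j` are adjacent
iff they are distinct and `W i j ≠ 0`. -/
def underlyingGraph {n : ℕ} (W : Matrix (Fin n) (Fin n) ℝ) : SimpleGraph (Fin n) :=
  SimpleGraph.fromRel (fun i j => W i j ≠ 0)

/-- The number of negative edges of a signed network: the number of unordered
pairs `{i, j}` with `W i j < 0` (counted via ordered pairs with `i < j`). -/
noncomputable def negEdgeCount {n : ℕ} (W : Matrix (Fin n) (Fin n) ℝ) : ℕ :=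
  letI := Classical.decPred (fun p : Fin n × Fin n => p.1 < p.2 ∧ W p.1 p.2 < 0)
  (Finset.univ.filter fun p : Fin n × Fin n => p.1 < p.2 ∧ W p.1 p.2 < 0).card


/-- Extension-by-zero linear map from functions on a subtype. -/
def extByZero {ι : Type*} (P : ι → Prop) [DecidablePred P] :
    ({i // P i} → ℝ) →ₗ[ℝ] (ι → ℝ) where
  toFun x i := if h : P i then x ⟨i, h⟩ else 0
  map_add' x y := by ext i; by_cases h : P i <;> simp [h]
  map_smul' c x := by ext i; by_cases h : P i <;> simp [h]

lemma neg_count_le {V : Type*} [AddCommGroup V] [Module ℝ V]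
    {ι κ : Type*} [Fintype ι] [Fintype κ] [DecidableEq ι] [DecidableEq κ]
    (d : ι → ℝ) (w : κ → ℝ)
    (A : V →ₗ[ℝ] (ι → ℝ)) (B : V →ₗ[ℝ] (κ → ℝ))
    (hA : Function.Surjective A)
    (hq : ∀ x, ∑ i, d i * (A x i) ^ 2 = ∑ k, w k * (B x k) ^ 2)
    [DecidablePred (fun i : ι => d i < 0)] [DecidablePred (fun k : κ => w k < 0)] :
    (Finset.univ.filter fun i : ι => d i < 0).card ≤
      (Finset.univ.filter fun k : κ => w k < 0).card := by
  obtain ⟨s, hs⟩ := A.exists_rightInverse_of_surjective (LinearMap.range_eq_top.2 hA)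
  set j := extByZero (fun i : ι => d i < 0) with hj
  set r := LinearMap.funLeft ℝ ℝ (Subtype.val : {k // w k < 0} → κ) with hr
  have hinj : Function.Injective (r ∘ₗ B ∘ₗ s ∘ₗ j) := by
    rw [injective_iff_map_eq_zero]
    intro x hx
    have hAv : A (s (j x)) = j x := by
      have := congrFun (congrArg DFunLike.coe hs) (j x)
      simpa using this
    have hq' := hq (s (j x))
    rw [hAv] at hq'
    have hL : ∑ i, d i * (j x i) ^ 2 = ∑ i : {i // d i < 0}, d i.1 * (x i) ^ 2 := by
      rw [← Finset.sum_filter_of_ne (p := fun i : ι => d i < 0)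
        (f := fun i => d i * (j x i) ^ 2)
        (fun i _ hne => by
          by_contra h
          exact hne (by simp [hj, extByZero, h])),
        Finset.sum_subtype (p := fun i : ι => d i < 0) _ (fun i => by simp) (fun i => d i * (j x i) ^ 2)]
      exact Finset.sum_congr rfl fun i _ => by simp [hj, extByZero, i.2]
    have hR : 0 ≤ ∑ k, w k * (B (s (j x)) k) ^ 2 := by
      apply Finset.sum_nonneg
      intro k _
      by_cases h : w k < 0
      · have : B (s (j x)) k = 0 := by
          have := congrFun hx ⟨k, h⟩
          simpa [hr, LinearMap.funLeft] using this
        simp [this]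
      · exact mul_nonneg (not_lt.1 h) (sq_nonneg _)
    rw [hL] at hq'
    have hnonpos : ∀ i ∈ (Finset.univ : Finset {i // d i < 0}),
        d i.1 * (x i) ^ 2 ≤ 0 := fun i _ =>
      mul_nonpos_of_nonpos_of_nonneg i.2.le (sq_nonneg _)
    have hsum0 : ∑ i : {i // d i < 0}, d i.1 * (x i) ^ 2 = 0 :=
      le_antisymm (Finset.sum_nonpos hnonpos) (hq' ▸ hR)
    have hzero := (Finset.sum_eq_zero_iff_of_nonpos hnonpos).1 hsum0
    ext i
    have h := hzero i (Finset.mem_univ i)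
    rcases mul_eq_zero.1 h with h' | h'
    · exact absurd h' (ne_of_lt i.2)
    · exact pow_eq_zero_iff (by norm_num) |>.1 h'
  have := LinearMap.finrank_le_finrank_of_injective hinj
  simpa [Module.finrank_pi, Fintype.card_subtype] using this

lemma laplacian_quad {n : ℕ} (W : Matrix (Fin n) (Fin n) ℝ)
    (hsymm : W.IsSymm) (hdiag : ∀ i, W i i = 0) (x : Fin n → ℝ) :
    x ⬝ᵥ (signedLaplacian W *ᵥ x) =
      ∑ p ∈ Finset.univ.filter (fun p : Fin n × Fin n => p.1 < p.2),
        W p.1 p.2 * (x p.1 - x p.2) ^ 2 := by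
  classical
  have key : ∀ i, ∑ j, (if i = j then ∑ k, W i k else -W i j) * x j
      = ∑ j, (W i j * x i - W i j * x j) := by
    intro i
    have h1 : ∀ j : Fin n, (if i = j then ∑ k, W i k else -W i j) * x j
        = (if i = j then ((∑ k, W i k) + W i j) * x j else 0) - W i j * x j := by
      intro j; by_cases h : i = j
      · subst h; simp [hdiag]
      · simp [h]
    rw [Finset.sum_congr rfl (fun j _ => h1 j), Finset.sum_sub_distrib,
      Finset.sum_ite_eq Finset.univ i (fun j => ((∑ k, W i k) + W i j) * x j)]
    simp [hdiag, Finset.sum_sub_distrib, Finset.sum_mul]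
  have claim1 : x ⬝ᵥ (signedLaplacian W *ᵥ x)
      = ∑ i, ∑ j, W i j * (x i ^ 2 - x i * x j) := by
    simp only [dotProduct, mulVec, signedLaplacian, Matrix.of_apply]
    refine Finset.sum_congr rfl fun i _ => ?_
    rw [show (∑ j, (if i = j then ∑ k, W i k else -W i j) * x j) = _ from key i,
      Finset.mul_sum]
    exact Finset.sum_congr rfl fun j _ => by ring
  rw [claim1, ← Finset.sum_product']
  set f : Fin n × Fin n → ℝ := fun p => W p.1 p.2 * (x p.1 ^ 2 - x p.1 * x p.2) with hf
  have hsplit1 := Finset.sum_filter_add_sum_filter_not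
    (Finset.univ ×ˢ Finset.univ) (fun p : Fin n × Fin n => p.1 < p.2) f
  have hsplit2 := Finset.sum_filter_add_sum_filter_not
    ((Finset.univ ×ˢ Finset.univ).filter (fun p : Fin n × Fin n => ¬ p.1 < p.2))
    (fun p : Fin n × Fin n => p.2 < p.1) f
  have hdiagzero : ∑ p ∈ ((Finset.univ ×ˢ Finset.univ).filter
      (fun p : Fin n × Fin n => ¬ p.1 < p.2)).filter
      (fun p : Fin n × Fin n => ¬ p.2 < p.1), f p = 0 := by
    apply Finset.sum_eq_zero
    intro p hp
    simp only [Finset.mem_filter] at hp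
    have heq : p.1 = p.2 := le_antisymm (not_lt.1 hp.2) (not_lt.1 hp.1.2)
    have hx : x p.1 ^ 2 - x p.1 * x p.2 = 0 := by rw [← heq]; ring
    simp [hf, hx]
  have hswap : ∑ p ∈ ((Finset.univ ×ˢ Finset.univ).filter
      (fun p : Fin n × Fin n => ¬ p.1 < p.2)).filter
      (fun p : Fin n × Fin n => p.2 < p.1), f p
      = ∑ p ∈ (Finset.univ ×ˢ Finset.univ).filter
        (fun p : Fin n × Fin n => p.1 < p.2),
        W p.1 p.2 * (x p.2 ^ 2 - x p.2 * x p.1) := by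
    refine Finset.sum_nbij' (fun p => Prod.swap p) (fun p => Prod.swap p) ?_ ?_ ?_ ?_ ?_
    · intro p hp; simp only [Finset.mem_filter] at hp ⊢
      exact ⟨by simp, hp.2⟩
    · intro p hp; simp only [Finset.mem_filter] at hp ⊢
      exact ⟨⟨by simp, not_lt.2 hp.2.le⟩, hp.2⟩
    · intro p _; exact Prod.swap_swap p
    · intro p _; exact Prod.swap_swap p
    · intro p hp
      simp only [Finset.mem_filter] at hp
      have hW : W p.2 p.1 = W p.1 p.2 := congrFun (congrFun hsymm p.1) p.2
      simp [hf, hW]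
  have huniv : ∑ p ∈ Finset.univ ×ˢ Finset.univ, f p
      = ∑ p ∈ (Finset.univ ×ˢ Finset.univ).filter
        (fun p : Fin n × Fin n => p.1 < p.2),
        (f p + W p.1 p.2 * (x p.2 ^ 2 - x p.2 * x p.1)) := by
    rw [Finset.sum_add_distrib, ← hswap]
    linarith [hsplit1, hsplit2, hdiagzero]
  rw [huniv]
  have : (Finset.univ ×ˢ Finset.univ).filter
      (fun p : Fin n × Fin n => p.1 < p.2)
      = Finset.univ.filter (fun p : Fin n × Fin n => p.1 < p.2) := by
    rw [Finset.univ_product_univ]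
  rw [this]
  exact Finset.sum_congr rfl fun p _ => by simp [hf]; ring

section eig
variable {n : ℕ} (L : Matrix (Fin n) (Fin n) ℝ) (hL : L.IsHermitian)

lemma eig_quad (x : Fin n → ℝ) :
    x ⬝ᵥ (L *ᵥ x) = ∑ i, hL.eigenvalues i *
      ((star (hL.eigenvectorUnitary : Matrix (Fin n) (Fin n) ℝ)).mulVecLin x i) ^ 2 := by
  set U := (hL.eigenvectorUnitary : Matrix (Fin n) (Fin n) ℝ) with hU
  set d := hL.eigenvalues with hd
  have hspec : L = U * Matrix.diagonal d * star U := by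
    have := hL.spectral_theorem
    simpa using this
  set y := (star U) *ᵥ x with hy
  have h1 : L *ᵥ x = U *ᵥ (Matrix.diagonal d *ᵥ y) := by
    rw [hspec, ← Matrix.mulVec_mulVec, ← Matrix.mulVec_mulVec]
  have h2 : x ⬝ᵥ (U *ᵥ (Matrix.diagonal d *ᵥ y)) = y ⬝ᵥ (Matrix.diagonal d *ᵥ y) := by
    rw [Matrix.dotProduct_mulVec]
    congr 1
    rw [hy, Matrix.star_eq_conjTranspose, Matrix.conjTranspose_eq_transpose_of_trivial,
      Matrix.mulVec_transpose]
  rw [h1, h2]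
  simp only [dotProduct, Matrix.mulVec_diagonal, Matrix.mulVecLin_apply]
  exact Finset.sum_congr rfl fun i _ => by rw [← hy]; ring

lemma eig_surj :
    Function.Surjective ((star (hL.eigenvectorUnitary : Matrix (Fin n) (Fin n) ℝ)).mulVecLin) := by
  intro y
  refine ⟨(hL.eigenvectorUnitary : Matrix (Fin n) (Fin n) ℝ) *ᵥ y, ?_⟩
  rw [Matrix.mulVecLin_apply, Matrix.mulVec_mulVec,
    Unitary.coe_star_mul_self hL.eigenvectorUnitary, Matrix.one_mulVec]

end eig

section tree
variable {n : ℕ} (W : Matrix (Fin n) (Fin n) ℝ)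

/-- Type of oriented edges with `i < j`. -/
abbrev EdgeIdx : Type := {p : Fin n × Fin n // p.1 < p.2 ∧ W p.1 p.2 ≠ 0}

/-- The difference linear map along edges. -/
noncomputable def diffMap : (Fin n → ℝ) →ₗ[ℝ] (EdgeIdx W → ℝ) :=
  LinearMap.pi fun e => LinearMap.proj (R := ℝ) (φ := fun _ : Fin n => ℝ) e.1.1 - LinearMap.proj (R := ℝ) (φ := fun _ : Fin n => ℝ) e.1.2

@[simp] lemma diffMap_apply (x : Fin n → ℝ) (e : EdgeIdx W) :
    diffMap W x e = x e.1.1 - x e.1.2 := rfl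

variable {W}

lemma edge_sum (x : Fin n → ℝ) :
    ∑ p ∈ Finset.univ.filter (fun p : Fin n × Fin n => p.1 < p.2),
        W p.1 p.2 * (x p.1 - x p.2) ^ 2
      = ∑ e : EdgeIdx W, W e.1.1 e.1.2 * (diffMap W x e) ^ 2 := by
  simp only [diffMap_apply]
  have h1 : ∑ e : EdgeIdx W, W e.1.1 e.1.2 * (x e.1.1 - x e.1.2) ^ 2
      = ∑ p ∈ Finset.univ.filter
          (fun p : Fin n × Fin n => p.1 < p.2 ∧ W p.1 p.2 ≠ 0),
        W p.1 p.2 * (x p.1 - x p.2) ^ 2 :=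
    (Finset.sum_subtype
      (p := fun p : Fin n × Fin n => p.1 < p.2 ∧ W p.1 p.2 ≠ 0)
      _ (fun p => by simp)
      (fun p => W p.1 p.2 * (x p.1 - x p.2) ^ 2)).symm
  rw [h1, show (Finset.univ.filter (fun p : Fin n × Fin n => p.1 < p.2 ∧ W p.1 p.2 ≠ 0))
      = (Finset.univ.filter (fun p : Fin n × Fin n => p.1 < p.2)).filter
        (fun p => W p.1 p.2 ≠ 0) by rw [Finset.filter_filter],
    Finset.sum_filter_of_ne
      (s := Finset.univ.filter (fun p : Fin n × Fin n => p.1 < p.2))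
      (p := fun p => W p.1 p.2 ≠ 0)
      (f := fun p => W p.1 p.2 * (x p.1 - x p.2) ^ 2)
      (fun p _ h hW => h (by simp [hW]))]

lemma edge_count (hsymm : W.IsSymm) (htree : (underlyingGraph W).IsTree) :
    Fintype.card (EdgeIdx W) + 1 = n := by
  have hcard := htree.card_edgeFinset
  rw [Fintype.card_fin] at hcard
  have hbij : (Finset.univ.filter
      (fun p : Fin n × Fin n => p.1 < p.2 ∧ W p.1 p.2 ≠ 0)).card
      = (underlyingGraph W).edgeFinset.card := by
    apply Finset.card_bij (fun (p : Fin n × Fin n) _ => s(p.1, p.2))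
    · intro p hp
      simp only [Finset.mem_filter, Finset.mem_univ, true_and] at hp
      rw [SimpleGraph.mem_edgeFinset, SimpleGraph.mem_edgeSet]
      exact ⟨hp.1.ne, Or.inl hp.2⟩
    · intro p hp q hq h
      simp only [Finset.mem_filter, Finset.mem_univ, true_and] at hp hq
      rw [Sym2.mk_eq_mk_iff] at h
      rcases h with h | h
      · exact Prod.ext_iff.2 ⟨congrArg Prod.fst h, congrArg Prod.snd h⟩
      · exfalso
        have h1 : p.1 = q.2 := congrArg Prod.fst h
        have h2 : p.2 = q.1 := congrArg Prod.snd h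
        have := hp.1.trans_le (h2 ▸ hq.1.le)
        exact absurd (h1 ▸ this) (lt_irrefl _)
    · intro e he
      rw [SimpleGraph.mem_edgeFinset] at he
      induction e with
      | _ i j =>
        rw [SimpleGraph.mem_edgeSet, underlyingGraph, SimpleGraph.fromRel_adj] at he
        obtain ⟨hne, hor⟩ := he
        have hW : W i j ≠ 0 := by
          rcases hor with h | h
          · exact h
          · rw [show W i j = W j i from (congrFun (congrFun hsymm i) j).symm]
            exact h
        rcases Ne.lt_or_gt hne with hlt | hlt
        · exact ⟨(i, j), by simp [hlt, hW], rfl⟩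
        · have hW' : W j i ≠ 0 := fun h => hW
            (((congrFun (congrFun hsymm i) j).symm : W i j = W j i).trans h)
          refine ⟨(j, i), by simp [hlt, hW'], ?_⟩
          exact Sym2.eq_swap
  rw [Fintype.card_subtype, hbij, hcard]
end tree

section surj
variable {n : ℕ} {W : Matrix (Fin n) (Fin n) ℝ}

lemma diffMap_surj (hsymm : W.IsSymm) (htree : (underlyingGraph W).IsTree) :
    Function.Surjective (diffMap W) := by
  have hne : Nonempty (Fin n) := htree.isConnected.nonempty
  -- kernel is the span of the constant vector 1
  have hker : LinearMap.ker (diffMap W) = Submodule.span ℝ {(fun _ => (1:ℝ))} := by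
    apply le_antisymm
    · intro x hx
      rw [LinearMap.mem_ker] at hx
      have hadj : ∀ {i j : Fin n}, (underlyingGraph W).Adj i j → x i = x j := by
        intro i j hij
        rw [underlyingGraph, SimpleGraph.fromRel_adj] at hij
        obtain ⟨hne', hor⟩ := hij
        have hWij : W i j ≠ 0 := by
          rcases hor with h | h
          · exact h
          · exact fun h0 => h (((congrFun (congrFun hsymm j) i).symm
              : W j i = W i j).trans h0)
        rcases Ne.lt_or_gt hne' with hlt | hlt
        · have := congrFun hx ⟨(i, j), hlt, hWij⟩
          simpa [sub_eq_zero] using this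
        · have hWji : W j i ≠ 0 := fun h0 => hWij
            (((congrFun (congrFun hsymm i) j).symm : W i j = W j i).trans h0)
          have := congrFun hx ⟨(j, i), hlt, hWji⟩
          simp only [diffMap_apply, Pi.zero_apply, sub_eq_zero] at this
          exact this.symm
      have hwalk : ∀ {i j : Fin n} (_ : (underlyingGraph W).Walk i j), x i = x j := by
        intro i j w
        induction w with
        | nil => rfl
        | cons h _ ih => exact (hadj h).trans ih
      obtain ⟨i₀⟩ := hne
      have hconst : ∀ i, x i = x i₀ := fun i =>
        (htree.isConnected.preconnected i i₀).elim fun w => hwalk w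
      have : x = x i₀ • (fun _ => (1:ℝ)) := funext fun i => by
        simp [hconst i]
      rw [this]
      exact Submodule.smul_mem _ _ (Submodule.mem_span_singleton_self _)
    · rw [Submodule.span_singleton_le_iff_mem, LinearMap.mem_ker]
      ext e
      simp
  have hkerrank : Module.finrank ℝ (LinearMap.ker (diffMap W)) = 1 := by
    rw [hker, finrank_span_singleton]
    intro h
    obtain ⟨i₀⟩ := hne
    exact one_ne_zero (congrFun h i₀)
  have hrn := (diffMap W).finrank_range_add_finrank_ker
  rw [hkerrank, Module.finrank_pi] at hrn
  rw [← LinearMap.range_eq_top]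
  apply Submodule.eq_top_of_finrank_eq
  rw [Module.finrank_pi]
  have hE := edge_count hsymm htree
  rw [Fintype.card_fin] at hrn
  omega

end surj

theorem negEig_eq_negEdgeCount_of_tree
    {n : ℕ} (W : Matrix (Fin n) (Fin n) ℝ)
    (hsymm : W.IsSymm) (hdiag : ∀ i, W i i = 0)
    (htree : (underlyingGraph W).IsTree)
    (L : Matrix (Fin n) (Fin n) ℝ) (hLdef : L = signedLaplacian W)
    (hL : L.IsHermitian) :
    negEigCount L hL = negEdgeCount W := by
  have key : ∀ x : Fin n → ℝ,
      ∑ i, hL.eigenvalues i *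
        ((star (hL.eigenvectorUnitary : Matrix (Fin n) (Fin n) ℝ)).mulVecLin x i) ^ 2
      = ∑ e : EdgeIdx W, W e.1.1 e.1.2 * (diffMap W x e) ^ 2 := fun x => by
    rw [← eig_quad L hL x, hLdef, laplacian_quad W hsymm hdiag x, edge_sum x]
  have le1 := neg_count_le _ _ _ _ (eig_surj L hL) key
  have le2 := neg_count_le _ _ _ _ (diffMap_surj hsymm htree) (fun x => (key x).symm)
  have h1 : negEigCount L hL
      = (Finset.univ.filter fun i : Fin n => hL.eigenvalues i < 0).card := by
    rw [negEigCount]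
  have h2 : (Finset.univ.filter fun e : EdgeIdx W => W e.1.1 e.1.2 < 0).card
      = (Finset.univ.filter fun p : Fin n × Fin n => p.1 < p.2 ∧ W p.1 p.2 < 0).card := by
    apply Finset.card_bij (fun e _ => e.1)
    · intro e he
      simp only [Finset.mem_filter, Finset.mem_univ, true_and] at he ⊢
      exact ⟨e.2.1, he⟩
    · intro a _ b _ h
      exact Subtype.ext h
    · intro p hp
      simp only [Finset.mem_filter, Finset.mem_univ, true_and] at hp
      exact ⟨⟨p, hp.1, ne_of_lt hp.2⟩, by simp [hp.2], rfl⟩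
  have h3 : negEdgeCount W
      = (Finset.univ.filter fun p : Fin n × Fin n => p.1 < p.2 ∧ W p.1 p.2 < 0).card := by
    rw [negEdgeCount]
    congr
  rw [h1, h3, ← h2]
  exact le_antisymm le1 le2
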